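/- For every σ ∈ [0, 1] there exists a constant C > 0 such that for all integers k ≥ 4 and all real t with |t| ≤ k^{1/3}, setting s = σ + it, one has |Γ(k − 1 + s)·Γ(k − 1 − s)/Γ(k − 1)² − 1| ≤ C·(1 + t²)/k. -/

import Mathlib

open Complex Set Metric MeasureTheory

lemma aux_norm_Gamma_le {s : ℂ} (hs : 0 < s.re) :
    ‖Complex.Gamma s‖ ≤ Real.Gamma s.re := by
  rw [Complex.Gamma_eq_integral hs, Complex.GammaIntegral, Real.Gamma_eq_integral hs]
  refine (norm_integral_le_integral_norm _).trans_eq ?_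
  refine setIntegral_congr_fun measurableSet_Ioi fun x hx => ?_
  rw [norm_mul, Complex.norm_real,
    Complex.norm_cpow_eq_rpow_re_of_pos hx, Complex.sub_re, Complex.one_re,
    Real.norm_of_nonneg (Real.exp_pos _).le]

lemma aux_gamma_prod_le (ν : ℝ) (m : ℕ) (hm : 1 ≤ m) (hν : 2 * (m:ℝ) ≤ ν) :
    ∀ i, i ≤ m → Real.Gamma (ν + i) * Real.Gamma (ν - i) ≤
      ((ν + m) / (ν - m)) ^ i * Real.Gamma ν ^ 2 := by
  have hm1 : (1:ℝ) ≤ m := by exact_mod_cast hm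
  have hνm : 0 < ν - m := by nlinarith
  have hν0 : 0 < ν := by nlinarith
  intro i
  induction i with
  | zero => intro _; simp [sq]
  | succ i ih =>
    intro hi
    have hi' : (i:ℝ) + 1 ≤ m := by exact_mod_cast hi
    have ihh := ih (le_of_lt (Nat.lt_of_succ_le hi))
    have h1 : ν + (i:ℝ) ≠ 0 := by positivity
    have h2 : 0 < ν - ((i:ℝ) + 1) := by nlinarith
    have e1 : Real.Gamma (ν + (i+1:ℕ)) = (ν + i) * Real.Gamma (ν + i) := by
      push_cast
      rw [show ν + ((i:ℝ) + 1) = (ν + i) + 1 by ring, Real.Gamma_add_one h1]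
    have e2 : Real.Gamma (ν - (i:ℕ)) = (ν - ((i:ℝ)+1)) * Real.Gamma (ν - ((i:ℝ)+1)) := by
      rw [show ν - (i:ℝ) = (ν - ((i:ℝ)+1)) + 1 by ring, Real.Gamma_add_one h2.ne']
    have hGpos : 0 < Real.Gamma (ν - ((i:ℝ)+1)) := Real.Gamma_pos_of_pos h2
    have hGpos2 : 0 < Real.Gamma (ν + i) := Real.Gamma_pos_of_pos (by positivity)
    -- from ihh : (ν - (i+1)) stuff
    have key : Real.Gamma (ν + i) * Real.Gamma (ν - ((i:ℝ)+1))
        ≤ ((ν + m)/(ν - m))^i * Real.Gamma ν ^2 / (ν - ((i:ℝ)+1)) := by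
      rw [le_div_iff₀ h2]
      calc Real.Gamma (ν + i) * Real.Gamma (ν - ((i:ℝ)+1)) * (ν - ((i:ℝ)+1))
          = Real.Gamma (ν + i) * Real.Gamma (ν - i) := by rw [e2]; ring
        _ ≤ _ := ihh
    have hfac : (ν + i) / (ν - ((i:ℝ)+1)) ≤ (ν + m) / (ν - m) := by
      exact div_le_div₀ (by nlinarith) (by nlinarith) hνm (by nlinarith)
    push_cast
    calc Real.Gamma (ν + ((i:ℝ)+1)) * Real.Gamma (ν - ((i:ℝ)+1))
        = (ν + i) * (Real.Gamma (ν + i) * Real.Gamma (ν - ((i:ℝ)+1))) := by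
          rw [show ν + ((i:ℝ)+1) = ν + (((i:ℕ):ℝ)+1) by push_cast; ring]
          rw [show (((i:ℕ):ℝ)+1) = ((i+1:ℕ):ℝ) by push_cast; ring] at *
          rw [e1]; push_cast; ring
      _ ≤ (ν + i) * (((ν + m)/(ν - m))^i * Real.Gamma ν ^2 / (ν - ((i:ℝ)+1))) := by
          apply mul_le_mul_of_nonneg_left key (by positivity)
      _ = (ν + i)/(ν - ((i:ℝ)+1)) * (((ν + m)/(ν - m))^i * Real.Gamma ν ^2) := by ring
      _ ≤ (ν + m)/(ν - m) * (((ν + m)/(ν - m))^i * Real.Gamma ν ^2) := by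
          apply mul_le_mul_of_nonneg_right hfac (by positivity)
      _ = ((ν + m)/(ν - m))^(i+1) * Real.Gamma ν ^2 := by ring

lemma aux_even_convex (ν r : ℝ) (hr : 0 ≤ r) (hνr : r < ν) {x : ℝ}
    (hx : x ∈ Set.Icc (-r) r) :
    Real.Gamma (ν + x) * Real.Gamma (ν - x) ≤ Real.Gamma (ν + r) * Real.Gamma (ν - r) := by
  set L : ℝ → ℝ := Real.log ∘ Real.Gamma with hL
  have hconv := Real.convexOn_log_Gamma
  set φ : ℝ → ℝ := fun y => L (ν + y) + L (ν - y) with hφ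
  have hmem : ∀ y ∈ Set.Icc (-r) r, (0:ℝ) < ν + y ∧ (0:ℝ) < ν - y := by
    intro y hy
    obtain ⟨h1, h2⟩ := hy
    constructor <;> linarith
  have hφconv : ConvexOn ℝ (Set.Icc (-r) r) φ := by
    refine ⟨convex_Icc _ _, ?_⟩
    intro p hp q hq a b ha hb hab
    have hp' := hmem p hp
    have hq' := hmem q hq
    have e1 : ν + (a • p + b • q) = a • (ν + p) + b • (ν + q) := by
      simp only [smul_eq_mul]; nlinarith [hab]
    have e2 : ν - (a • p + b • q) = a • (ν - p) + b • (ν - q) := by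
      simp only [smul_eq_mul]; nlinarith [hab]
    have t1 := hconv.2 (Set.mem_Ioi.mpr hp'.1) (Set.mem_Ioi.mpr hq'.1) ha hb hab
    have t2 := hconv.2 (Set.mem_Ioi.mpr hp'.2) (Set.mem_Ioi.mpr hq'.2) ha hb hab
    simp only [hφ, e1, e2]
    calc L (a • (ν + p) + b • (ν + q)) + L (a • (ν - p) + b • (ν - q))
        ≤ (a • L (ν + p) + b • L (ν + q)) + (a • L (ν - p) + b • L (ν - q)) :=
          add_le_add t1 t2
      _ = a • (L (ν + p) + L (ν - p)) + b • (L (ν + q) + L (ν - q)) := by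
          simp only [smul_eq_mul]; ring
  have hxseg : x ∈ segment ℝ (-r) r := by
    rw [segment_eq_Icc (by linarith : -r ≤ r)]; exact hx
  obtain ⟨a, b, ha, hb, hab, hxab⟩ := hxseg
  have hmax := hφconv.le_on_segment (Set.mem_Icc.mpr ⟨le_refl _, by linarith⟩)
      (Set.mem_Icc.mpr ⟨by linarith, le_refl _⟩)
      (by rw [segment_eq_Icc (by linarith : -r ≤ r)]; exact hx)
  have heven : φ (-r) = φ r := by simp only [hφ]; rw [sub_neg_eq_add]; ring_nf
  rw [heven, max_self] at hmax
  -- exponentiate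
  have hx' := hmem x hx
  have hr' : (0:ℝ) < ν + r ∧ (0:ℝ) < ν - r := ⟨by linarith, by linarith⟩
  have eexp : ∀ y : ℝ, 0 < ν + y → 0 < ν - y →
      Real.Gamma (ν + y) * Real.Gamma (ν - y) = Real.exp (φ y) := by
    intro y h1 h2
    simp only [hφ, hL, Function.comp_apply]
    rw [Real.exp_add, Real.exp_log (Real.Gamma_pos_of_pos h1),
      Real.exp_log (Real.Gamma_pos_of_pos h2)]
  rw [eexp x hx'.1 hx'.2, eexp r hr'.1 hr'.2]
  exact Real.exp_le_exp.mpr hmax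

lemma aux_ne_neg_nat {w : ℂ} (hw : 0 < w.re) : ∀ m : ℕ, w ≠ -(m:ℂ) := by
  intro m h
  rw [h] at hw
  simp only [neg_re, natCast_re] at hw
  have : (0:ℝ) ≤ m := Nat.cast_nonneg m
  linarith

lemma aux_small (σ : ℝ) (hσ : σ ∈ Set.Icc (0:ℝ) 1) :
    ∃ B : ℝ, ∀ k : ℕ, 4 ≤ k → k ≤ 1000 → ∀ t : ℝ, |t| ≤ 10 →
      ‖Complex.Gamma ((k : ℂ) - 1 + (σ + t * Complex.I)) *
          Complex.Gamma ((k : ℂ) - 1 - (σ + t * Complex.I)) /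
          Complex.Gamma ((k : ℂ) - 1) ^ 2 - 1‖ ≤ B := by
  obtain ⟨hσ0, hσ1⟩ := hσ
  set Ψ : ℝ × ℝ → ℂ := fun p =>
    Complex.Gamma ((p.1 : ℂ) - 1 + (σ + p.2 * Complex.I)) *
      Complex.Gamma ((p.1 : ℂ) - 1 - (σ + p.2 * Complex.I)) /
      Complex.Gamma ((p.1 : ℂ) - 1) ^ 2 - 1 with hΨ
  have hK : IsCompact (Set.Icc (4:ℝ) 1000 ×ˢ Set.Icc (-10:ℝ) 10) :=
    isCompact_Icc.prod isCompact_Icc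
  have hcont : ContinuousOn Ψ (Set.Icc (4:ℝ) 1000 ×ˢ Set.Icc (-10:ℝ) 10) := by
    intro p hp
    obtain ⟨hp1, hp2⟩ := hp
    have hp14 : (4:ℝ) ≤ p.1 := hp1.1
    apply ContinuousAt.continuousWithinAt
    have hc1 : ContinuousAt (fun p : ℝ × ℝ => (p.1 : ℂ) - 1 + (σ + p.2 * Complex.I)) p := by
      fun_prop
    have hc2 : ContinuousAt (fun p : ℝ × ℝ => (p.1 : ℂ) - 1 - (σ + p.2 * Complex.I)) p := by
      fun_prop
    have hc3 : ContinuousAt (fun p : ℝ × ℝ => (p.1 : ℂ) - 1) p := by fun_prop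
    have hre1 : (0:ℝ) < ((p.1 : ℂ) - 1 + (σ + p.2 * Complex.I)).re := by
      simp only [add_re, sub_re, ofReal_re, one_re, mul_re, I_re, I_im, ofReal_im]
      norm_num
      linarith
    have hre2 : (0:ℝ) < ((p.1 : ℂ) - 1 - (σ + p.2 * Complex.I)).re := by
      simp only [sub_re, add_re, ofReal_re, one_re, mul_re, I_re, I_im, ofReal_im]
      norm_num
      linarith
    have hre3 : (0:ℝ) < ((p.1 : ℂ) - 1).re := by
      simp only [sub_re, ofReal_re, one_re]; linarith
    have hG1 : ContinuousAt (fun p : ℝ × ℝ =>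
        Complex.Gamma ((p.1 : ℂ) - 1 + (σ + p.2 * Complex.I))) p :=
      ContinuousAt.comp (g := Complex.Gamma)
        (Complex.differentiableAt_Gamma _ (aux_ne_neg_nat hre1)).continuousAt hc1
    have hG2 : ContinuousAt (fun p : ℝ × ℝ =>
        Complex.Gamma ((p.1 : ℂ) - 1 - (σ + p.2 * Complex.I))) p :=
      ContinuousAt.comp (g := Complex.Gamma)
        (Complex.differentiableAt_Gamma _ (aux_ne_neg_nat hre2)).continuousAt hc2
    have hG3 : ContinuousAt (fun p : ℝ × ℝ => Complex.Gamma ((p.1 : ℂ) - 1)) p :=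
      ContinuousAt.comp (g := Complex.Gamma)
        (Complex.differentiableAt_Gamma _ (aux_ne_neg_nat hre3)).continuousAt hc3
    have hne : Complex.Gamma ((p.1 : ℂ) - 1) ^ 2 ≠ 0 :=
      pow_ne_zero 2 (Complex.Gamma_ne_zero (aux_ne_neg_nat hre3))
    exact (((hG1.mul hG2).div (hG3.pow 2) hne).sub continuousAt_const)
  obtain ⟨B, hB⟩ := hK.exists_bound_of_continuousOn hcont
  refine ⟨B, fun k hk4 hk1000 t ht => ?_⟩
  have hmem : ((k:ℝ), t) ∈ Set.Icc (4:ℝ) 1000 ×ˢ Set.Icc (-10:ℝ) 10 := by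
    have h1 : (k:ℝ) ∈ Set.Icc (4:ℝ) 1000 := ⟨by exact_mod_cast hk4, by exact_mod_cast hk1000⟩
    have h2 : t ∈ Set.Icc (-10:ℝ) 10 := ⟨by linarith [neg_abs_le t], le_trans (le_abs_self t) ht⟩
    exact Set.mem_prod.mpr ⟨h1, h2⟩
  have := hB ((k:ℝ), t) hmem
  simpa only [hΨ, Complex.ofReal_natCast] using this

set_option maxHeartbeats 1000000 in
lemma aux_big (σ : ℝ) (hσ0 : 0 ≤ σ) (hσ1 : σ ≤ 1) (k : ℕ) (hk1000 : 1000 ≤ k)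
    (t : ℝ) (ht : |t| ≤ (k : ℝ) ^ (1/3 : ℝ)) :
    ‖Complex.Gamma ((k : ℂ) - 1 + (σ + t * Complex.I)) *
        Complex.Gamma ((k : ℂ) - 1 - (σ + t * Complex.I)) /
        Complex.Gamma ((k : ℂ) - 1) ^ 2 - 1‖ ≤ 488 * (1 + t^2) / k := by
  have hk0 : (0:ℝ) < k := by positivity
  have ht2 : (0:ℝ) ≤ t ^ 2 := sq_nonneg t
  set n := k - 1 with hn
  have hn999 : 999 ≤ n := by omega
  set m := Nat.sqrt n with hmdef
  have hm31 : 31 ≤ m := Nat.le_sqrt'.mpr (by omega)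
  have hmsq : m ^ 2 ≤ n := Nat.sqrt_le' n
  have hlt : n < (m + 1) ^ 2 := Nat.lt_succ_sqrt' n
  have hkle : k ≤ (m + 1) ^ 2 := by omega
  have hk4m : k ≤ 4 * m ^ 2 := by nlinarith [hm31, hkle]
  -- real versions
  set νR : ℝ := (k:ℝ) - 1 with hνR
  have hnR : (n:ℝ) = νR := by
    rw [hn, Nat.cast_sub (by omega : 1 ≤ k)]; norm_num; exact hνR.symm
  have hk1000R : (1000:ℝ) ≤ (k:ℝ) := by exact_mod_cast hk1000
  have hνpos : (0:ℝ) < νR := by rw [hνR]; linarith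
  have hmR31 : (31:ℝ) ≤ (m:ℝ) := by exact_mod_cast hm31
  have hm2ν : (m:ℝ) ^ 2 ≤ νR := by rw [← hnR]; exact_mod_cast hmsq
  have hνlt : νR < ((m:ℝ) + 1) ^ 2 := by rw [← hnR]; exact_mod_cast hlt
  have h2mν : 2 * (m:ℝ) ≤ νR := by nlinarith
  have hmν : (m:ℝ) < νR := by nlinarith
  have hk4mR : (k:ℝ) ≤ 4 * (m:ℝ) ^ 2 := by exact_mod_cast hk4m
  have hmpos : (0:ℝ) < m := by linarith
  clear_value n m νR
  clear hn hmdef hn999 hmsq hlt hkle hk4m hnR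
  have hx13 : (0:ℝ) ≤ (k:ℝ) ^ (1/3:ℝ) := Real.rpow_nonneg hk0.le _
  have hkey : (k:ℝ) ^ (1/3:ℝ) + 2 < (m:ℝ) + 1 := by
    set x : ℝ := (k:ℝ) ^ (1/3:ℝ) with hxdef
    clear_value x
    have hx2 : x ^ 2 = (k:ℝ) ^ (2/3:ℝ) := by
      rw [hxdef, ← Real.rpow_natCast ((k:ℝ) ^ (1/3:ℝ)) 2, ← Real.rpow_mul hk0.le]
      norm_num
    have h8 : (8:ℝ) ≤ x := by
      have h512 : (512:ℝ) ^ (1/3:ℝ) = 8 := by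
        rw [show (512:ℝ) = 8 ^ (3:ℕ) by norm_num, ← Real.rpow_natCast 8 3,
          ← Real.rpow_mul (by norm_num)]
        norm_num
      rw [← h512, hxdef]
      exact Real.rpow_le_rpow (by norm_num) (by linarith) (by norm_num)
    have h23 : (k:ℝ) ^ (2/3:ℝ) * x = k := by
      rw [hxdef, ← Real.rpow_add hk0]
      norm_num
    have hk23 : (k:ℝ) ^ (2/3:ℝ) ≤ (k:ℝ) / 8 := by
      have hnn : (0:ℝ) ≤ (k:ℝ) ^ (2/3:ℝ) := Real.rpow_nonneg hk0.le _
      nlinarith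
    have hsq : (x + 2) ^ 2 < ((m:ℝ) + 1) ^ 2 := by
      nlinarith [mul_nonneg (by linarith : (0:ℝ) ≤ x - 8) (by linarith : (0:ℝ) ≤ x)]
    have := lt_of_pow_lt_pow_left₀ 2 (by positivity : (0:ℝ) ≤ (m:ℝ) + 1) hsq
    linarith
  -- the function
  set f : ℂ → ℂ := fun z => Complex.Gamma ((k : ℂ) - 1 + z) *
      Complex.Gamma ((k : ℂ) - 1 - z) / Complex.Gamma ((k : ℂ) - 1) ^ 2 - 1 with hf
  have hreν : ((k : ℂ) - 1).re = νR := by simp [hνR]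
  have hcast : ((νR : ℝ) : ℂ) = (k:ℂ) - 1 := by rw [hνR]; push_cast; ring
  have hΓν : Complex.Gamma ((k:ℂ) - 1) ≠ 0 :=
    Complex.Gamma_ne_zero (aux_ne_neg_nat (by rw [hreν]; exact hνpos))
  have hGν : (0:ℝ) < Real.Gamma νR := Real.Gamma_pos_of_pos hνpos
  -- bound on q^m
  have hqnn : (0:ℝ) ≤ (νR + m) / (νR - m) :=
    div_nonneg (by linarith) (by linarith)
  have hεν : (m:ℝ) / νR * νR = m := div_mul_cancel₀ _ (ne_of_gt hνpos)
  have h2e : 2 * ((m:ℝ) / νR) ≤ 1 := by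
    rw [mul_div_assoc']
    exact (div_le_one hνpos).mpr (by linarith)
  have hqle : (νR + m) / (νR - m) ≤ 1 + 4 * ((m:ℝ) / νR) := by
    rw [div_le_iff₀ (by linarith : (0:ℝ) < νR - m)]
    nlinarith [hεν, mul_le_mul_of_nonneg_right h2e (Nat.cast_nonneg m : (0:ℝ) ≤ m)]
  have hqm : ((νR + m) / (νR - m)) ^ m ≤ 55 := by
    have h1 : ((νR + m) / (νR - m)) ^ m ≤ Real.exp (4 * ((m:ℝ) / νR)) ^ m := by
      apply pow_le_pow_left₀ hqnn
      exact hqle.trans (by linarith [Real.add_one_le_exp (4 * ((m:ℝ) / νR))])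
    have h2 : Real.exp (4 * ((m:ℝ) / νR)) ^ m = Real.exp ((m:ℝ) * (4 * ((m:ℝ) / νR))) :=
      (Real.exp_nat_mul _ m).symm
    have h3 : (m:ℝ) * (4 * ((m:ℝ) / νR)) ≤ 4 := by
      have he : (m:ℝ) * (4 * ((m:ℝ) / νR)) = 4 * ((m:ℝ) ^ 2) / νR := by ring
      rw [he, div_le_iff₀ hνpos]; linarith
    have h4 : Real.exp 4 ≤ 55 := by
      have he : Real.exp 4 = Real.exp 1 ^ (4:ℕ) := by
        rw [show (4:ℝ) = ((4:ℕ):ℝ) * 1 by norm_num, Real.exp_nat_mul]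
      rw [he]
      have h5 : Real.exp 1 ^ (4:ℕ) ≤ (2.7182818286:ℝ) ^ (4:ℕ) :=
        pow_le_pow_left₀ (Real.exp_pos 1).le Real.exp_one_lt_d9.le 4
      exact h5.trans (by norm_num)
    rw [h2] at h1
    calc ((νR + m) / (νR - m)) ^ m ≤ Real.exp ((m:ℝ) * (4 * ((m:ℝ) / νR))) := h1
      _ ≤ Real.exp 4 := Real.exp_le_exp.mpr h3
      _ ≤ 55 := h4
  -- sup bound on closed ball
  have hFb : ∀ z ∈ closedBall (0:ℂ) (m:ℝ), ‖f z‖ < 60 := by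
    intro z hz
    have hzn : ‖z‖ ≤ (m:ℝ) := by simpa [dist_zero_right] using mem_closedBall.mp hz
    have hxabs : |z.re| ≤ (m:ℝ) := (abs_re_le_norm z).trans hzn
    have hxI : z.re ∈ Set.Icc (-(m:ℝ)) (m:ℝ) := abs_le.mp hxabs
    have hre1 : ((k:ℂ) - 1 + z).re = νR + z.re := by simp [hνR]
    have hre2 : ((k:ℂ) - 1 - z).re = νR - z.re := by simp [hνR]
    have hp1 : (0:ℝ) < νR + z.re := by
      have := hxI.1; linarith
    have hp2 : (0:ℝ) < νR - z.re := by
      have := hxI.2; linarith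
    have n1 : ‖Complex.Gamma ((k:ℂ) - 1 + z)‖ ≤ Real.Gamma (νR + z.re) := by
      have := aux_norm_Gamma_le (s := (k:ℂ) - 1 + z) (by rw [hre1]; exact hp1)
      rwa [hre1] at this
    have n2 : ‖Complex.Gamma ((k:ℂ) - 1 - z)‖ ≤ Real.Gamma (νR - z.re) := by
      have := aux_norm_Gamma_le (s := (k:ℂ) - 1 - z) (by rw [hre2]; exact hp2)
      rwa [hre2] at this
    have hconv : Real.Gamma (νR + z.re) * Real.Gamma (νR - z.re) ≤
        Real.Gamma (νR + m) * Real.Gamma (νR - m) :=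
      aux_even_convex νR m (by positivity) hmν hxI
    have hprod : Real.Gamma (νR + m) * Real.Gamma (νR - m) ≤
        ((νR + m) / (νR - m)) ^ m * Real.Gamma νR ^ 2 :=
      aux_gamma_prod_le νR m (by omega) h2mν m le_rfl
      
    have hdenom : ‖Complex.Gamma ((k:ℂ) - 1) ^ 2‖ = Real.Gamma νR ^ 2 := by
      rw [norm_pow, ← hcast, Complex.Gamma_ofReal, Complex.norm_real,
        Real.norm_of_nonneg hGν.le]
    have hnum : ‖Complex.Gamma ((k:ℂ) - 1 + z) * Complex.Gamma ((k:ℂ) - 1 - z)‖ ≤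
        55 * Real.Gamma νR ^ 2 := by
      rw [norm_mul]
      calc ‖Complex.Gamma ((k:ℂ) - 1 + z)‖ * ‖Complex.Gamma ((k:ℂ) - 1 - z)‖
          ≤ Real.Gamma (νR + z.re) * Real.Gamma (νR - z.re) :=
            mul_le_mul n1 n2 (norm_nonneg _) (Real.Gamma_pos_of_pos hp1).le
        _ ≤ Real.Gamma (νR + m) * Real.Gamma (νR - m) := hconv
        _ ≤ ((νR + m) / (νR - m)) ^ m * Real.Gamma νR ^ 2 := hprod
        _ ≤ 55 * Real.Gamma νR ^ 2 := mul_le_mul_of_nonneg_right hqm (sq_nonneg _)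
    have hFz : ‖Complex.Gamma ((k:ℂ) - 1 + z) * Complex.Gamma ((k:ℂ) - 1 - z) /
        Complex.Gamma ((k:ℂ) - 1) ^ 2‖ ≤ 55 := by
      rw [norm_div, hdenom, div_le_iff₀ (by positivity)]
      exact hnum
    calc ‖f z‖ ≤ ‖Complex.Gamma ((k:ℂ) - 1 + z) * Complex.Gamma ((k:ℂ) - 1 - z) /
          Complex.Gamma ((k:ℂ) - 1) ^ 2‖ + ‖(1:ℂ)‖ := norm_sub_le _ _
      _ ≤ 55 + 1 := by rw [norm_one]; linarith
      _ < 60 := by norm_num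
  -- differentiability
  have hd : DifferentiableOn ℂ f (ball (0:ℂ) (m:ℝ)) := by
    intro z hz
    apply DifferentiableAt.differentiableWithinAt
    have hzn : ‖z‖ < (m:ℝ) := by simpa [dist_zero_right] using mem_ball.mp hz
    have hxabs : |z.re| ≤ (m:ℝ) := (abs_re_le_norm z).trans
      (by exact hzn.le)
    have hre1 : ((k:ℂ) - 1 + z).re = νR + z.re := by simp [hνR]
    have hre2 : ((k:ℂ) - 1 - z).re = νR - z.re := by simp [hνR]
    have hp1 : (0:ℝ) < ((k:ℂ) - 1 + z).re := by
      rw [hre1]; have := (abs_le.mp hxabs).1; linarith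
    have hp2 : (0:ℝ) < ((k:ℂ) - 1 - z).re := by
      rw [hre2]; have := (abs_le.mp hxabs).2; linarith
    have d1 : DifferentiableAt ℂ (fun w => Complex.Gamma ((k:ℂ) - 1 + w)) z :=
      DifferentiableAt.comp (g := Complex.Gamma) z
        (Complex.differentiableAt_Gamma _ (aux_ne_neg_nat hp1))
        ((differentiableAt_const _).add differentiableAt_id)
    have d2 : DifferentiableAt ℂ (fun w => Complex.Gamma ((k:ℂ) - 1 - w)) z :=
      DifferentiableAt.comp (g := Complex.Gamma) z
        (Complex.differentiableAt_Gamma _ (aux_ne_neg_nat hp2))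
        ((differentiableAt_const _).sub differentiableAt_id)
    exact ((d1.mul d2).div_const _).sub (differentiableAt_const 1)
  -- f 0 = 0 and evenness
  have hf0 : f 0 = 0 := by
    simp only [hf, add_zero, sub_zero]
    rw [← sq, div_self (pow_ne_zero 2 hΓν), sub_self]
  have heven : ∀ z : ℂ, f (-z) = f z := by
    intro z
    simp only [hf, sub_neg_eq_add, ← sub_eq_add_neg]
    rw [mul_comm]
  have hderiv : deriv f 0 = 0 := by
    have h := deriv_comp_neg (f := f) (x := (0:ℂ))
    rw [neg_zero] at h
    have heq : (fun z : ℂ => f (-z)) = f := funext heven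
    rw [heq] at h
    have h2 : (2:ℂ) * deriv f 0 = 0 := by linear_combination h
    exact (mul_eq_zero.mp h2).resolve_left two_ne_zero
  -- first Schwarz
  have hmaps1 : Set.MapsTo f (ball (0:ℂ) (m:ℝ)) (ball (f 0) 60) := by
    intro z hz
    rw [hf0, mem_ball, dist_zero_right]
    exact hFb z (ball_subset_closedBall hz)
  have hgb : ∀ z ∈ ball (0:ℂ) (m:ℝ), ‖dslope f 0 z‖ ≤ 60 / (m:ℝ) := fun z hz =>
    Complex.norm_dslope_le_div_of_mapsTo_ball hd (hmaps1.mono_right ball_subset_closedBall) hz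
  -- second Schwarz
  have hgd : DifferentiableOn ℂ (dslope f 0) (ball (0:ℂ) (m:ℝ)) :=
    (Complex.differentiableOn_dslope (ball_mem_nhds _ hmpos)).mpr hd
  have hg0 : dslope f 0 0 = 0 := by rw [dslope_same]; exact hderiv
  have hmaps2 : Set.MapsTo (dslope f 0) (ball (0:ℂ) (m:ℝ)) (ball (dslope f 0 0) (61 / (m:ℝ))) := by
    intro z hz
    rw [hg0, mem_ball, dist_zero_right]
    calc ‖dslope f 0 z‖ ≤ 60 / (m:ℝ) := hgb z hz
      _ < 61 / (m:ℝ) := by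
          apply div_lt_div_of_pos_right (by norm_num) hmpos
  -- apply at s
  set s : ℂ := (σ:ℂ) + (t:ℂ) * I with hs
  -- norm of s
  have hsnorm2 : ‖s‖ ^ 2 = σ ^ 2 + t ^ 2 := by
    rw [hs, Complex.sq_norm, Complex.normSq_add_mul_I]
  have hsle : ‖s‖ ≤ 1 + |t| := by
    calc ‖s‖ ≤ ‖(σ:ℂ)‖ + ‖(t:ℂ) * I‖ := norm_add_le _ _
      _ = |σ| + |t| := by
          rw [norm_mul, Complex.norm_I, mul_one, Complex.norm_real, Complex.norm_real,
            Real.norm_eq_abs, Real.norm_eq_abs]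
      _ ≤ 1 + |t| := by rw [_root_.abs_of_nonneg hσ0]; linarith
  -- key: 1 + k^(1/3) < m
  have hsball : s ∈ ball (0:ℂ) (m:ℝ) := by
    rw [mem_ball, dist_zero_right]
    calc ‖s‖ ≤ 1 + |t| := hsle
      _ ≤ 1 + (k:ℝ) ^ (1/3:ℝ) := by linarith
      _ < (m:ℝ) := by linarith
  -- conclude
  have hschwarz2 := Complex.dist_le_div_mul_dist_of_mapsTo_ball hgd (hmaps2.mono_right ball_subset_closedBall) hsball
  rw [hg0, dist_zero_right, dist_zero_right] at hschwarz2
  have hfs : ‖f s‖ = ‖s‖ * ‖dslope f 0 s‖ := by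
    have := sub_smul_dslope f 0 s
    rw [sub_zero, hf0, sub_zero] at this
    rw [← this, norm_smul]
  have hmain : ‖f s‖ ≤ 61 / (m:ℝ) ^ 2 * ‖s‖ ^ 2 := by
    rw [hfs]
    calc ‖s‖ * ‖dslope f 0 s‖ ≤ ‖s‖ * (61 / (m:ℝ) / (m:ℝ) * ‖s‖) := by
          apply mul_le_mul_of_nonneg_left hschwarz2 (norm_nonneg s)
      _ = 61 / (m:ℝ) ^ 2 * ‖s‖ ^ 2 := by ring
  show ‖f s‖ ≤ 488 * (1 + t ^ 2) / k
  have hs2 : ‖s‖ ^ 2 ≤ 1 + t ^ 2 := by rw [hsnorm2]; nlinarith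
  calc ‖f s‖ ≤ 61 / (m:ℝ) ^ 2 * ‖s‖ ^ 2 := hmain
    _ ≤ 61 / (m:ℝ) ^ 2 * (1 + t ^ 2) := by
        apply mul_le_mul_of_nonneg_left hs2 (by positivity)
    _ ≤ 488 * (1 + t ^ 2) / k := by
        rw [div_mul_eq_mul_div, mul_comm, div_le_div_iff₀ (by positivity) hk0]
        nlinarith [mul_le_mul_of_nonneg_left hk4mR
            (by positivity : (0:ℝ) ≤ 61 * (1 + t ^ 2))]


theorem gamma_ratio_stirling (σ : ℝ) (hσ : σ ∈ Set.Icc (0:ℝ) 1) :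
    ∃ C : ℝ, 0 < C ∧ ∀ k : ℕ, 4 ≤ k → ∀ t : ℝ, |t| ≤ (k : ℝ) ^ (1/3 : ℝ) →
      ‖Complex.Gamma ((k : ℂ) - 1 + (σ + t * Complex.I)) *
          Complex.Gamma ((k : ℂ) - 1 - (σ + t * Complex.I)) /
          Complex.Gamma ((k : ℂ) - 1) ^ 2 - 1‖ ≤ C * (1 + t^2) / k := by
  obtain ⟨hσ0, hσ1⟩ := hσ
  obtain ⟨B, hB⟩ := aux_small σ ⟨hσ0, hσ1⟩
  refine ⟨1000 * (|B| + 1) + 488, by positivity, ?_⟩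
  intro k hk4 t ht
  have hk0 : (0:ℝ) < k := by positivity
  have ht2 : (0:ℝ) ≤ t ^ 2 := sq_nonneg t
  by_cases hk : k ≤ 1000
  · -- small case
    have h10 : (k:ℝ) ^ (1/3 : ℝ) ≤ 10 := by
      calc (k:ℝ) ^ (1/3:ℝ) ≤ (1000:ℝ) ^ (1/3:ℝ) :=
            Real.rpow_le_rpow (by positivity) (by exact_mod_cast hk) (by norm_num)
        _ = 10 := by
            rw [show (1000:ℝ) = 10 ^ (3:ℕ) by norm_num, ← Real.rpow_natCast 10 3,
              ← Real.rpow_mul (by norm_num)]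
            norm_num
    have hb := (hB k hk4 hk t (ht.trans h10)).trans (le_abs_self B)
    refine hb.trans ?_
    rw [le_div_iff₀ hk0]
    have hkR : (k:ℝ) ≤ 1000 := by exact_mod_cast hk
    nlinarith [abs_nonneg B, mul_le_mul_of_nonneg_left hkR (abs_nonneg B),
      mul_nonneg (by positivity : (0:ℝ) ≤ 1000 * (|B| + 1) + 488) ht2]
  · -- big case
    push_neg at hk
    have hbig := aux_big σ hσ0 hσ1 k (by omega) t ht
    refine hbig.trans ?_
    gcongr
    nlinarith [abs_nonneg B]
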